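/- For every d ≥ 2 there exists a family F ⊆ {0,1,*}^d of size 3·2^{d-2} such that every two distinct members x,y satisfy 1 ≤ D(x,y) ≤ d-1. For example, F = {v ∈ {0,1}^d : v_1 = 0} ∪ {x : x_1 = 1, x_2 = *, x_3⋯x_d ∈ {0,1}^{d-2}} works. -/

import Mathlib

open Finset

/-- Number of coordinates where one string has 0 and the other 1. -/
def Dd {d : ℕ} (x y : Fin d → Option Bool) : ℕ :=
  (univ.filter fun i => ∃ b : Bool, x i = some b ∧ y i = some !b).card

/-- The subcube of binary strings agreeing with `x` on all non-joker coordinates. -/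
def Hcube {d : ℕ} (x : Fin d → Option Bool) : Finset (Fin d → Bool) :=
  univ.filter fun u => ∀ i : Fin d, ∀ b : Bool, x i = some b → u i = b

/-- Number of joker (`*`) coordinates of `x`. -/
def jok {d : ℕ} (x : Fin d → Option Bool) : ℕ :=
  (univ.filter fun i => x i = none).card

/-- `k`-neighborly family of strings in `{0,1,*}^d`. -/
def Nbly {d : ℕ} (k : ℕ) (F : Finset (Fin d → Option Bool)) : Prop :=
  ∀ x ∈ F, ∀ y ∈ F, x ≠ y → 1 ≤ Dd x y ∧ Dd x y ≤ k

/-- `n(k,d)`: maximum size of a `k`-neighborly family in `{0,1,*}^d`. -/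
noncomputable def nbox (k d : ℕ) : ℕ :=
  sSup {n | ∃ F : Finset (Fin d → Option Bool), Nbly k F ∧ F.card = n}

theorem stmt_8 {d : ℕ} (hd : 2 ≤ d) :
    ∃ F : Finset (Fin d → Option Bool),
      F.card = 3 * 2 ^ (d - 2) ∧ Nbly (d - 1) F := by
  have h0d : 0 < d := by omega
  have h1d : 1 < d := by omega
  set i0 : Fin d := ⟨0, h0d⟩ with hi0
  set i1 : Fin d := ⟨1, h1d⟩ with hi1
  have h01 : i0 ≠ i1 := by simp [hi0, hi1, Fin.ext_iff]
  set f : Option Bool × ({i : Fin d // i ≠ i0 ∧ i ≠ i1} → Bool) → (Fin d → Option Bool) :=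
    fun p i => if h0 : i = i0 then some p.1.isNone
      else if h1 : i = i1 then p.1
      else some (p.2 ⟨i, h0, h1⟩) with hf
  have hf0 : ∀ p, f p i0 = some p.1.isNone := by intro p; simp [hf]
  have hf1 : ∀ p, f p i1 = p.1 := by intro p; simp [hf, h01.symm]
  have hf2 : ∀ p (i : Fin d) (h0 : i ≠ i0) (h1 : i ≠ i1),
      f p i = some (p.2 ⟨i, h0, h1⟩) := by
    intro p i h0 h1; simp [hf, h0, h1]
  have hinj : Function.Injective f := by
    intro p q hpq
    have e1 : p.1 = q.1 := by rw [← hf1 p, ← hf1 q, hpq]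
    have e2 : p.2 = q.2 := by
      funext i
      have h := congrFun hpq i.val
      rw [hf2 p i.val i.2.1 i.2.2, hf2 q i.val i.2.1 i.2.2] at h
      simpa using h
    exact Prod.ext e1 e2
  have hsub : Fintype.card {i : Fin d // i ≠ i0 ∧ i ≠ i1} = d - 2 := by
    rw [Fintype.card_subtype]
    have heq : (univ.filter fun i : Fin d => i ≠ i0 ∧ i ≠ i1) =
        univ \ ({i0, i1} : Finset (Fin d)) := by
      ext i; simp
    rw [heq, card_sdiff_of_subset (subset_univ _), card_univ, Fintype.card_fin,
      card_insert_of_notMem (by simp [h01]), card_singleton]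
  refine ⟨univ.image f, ?_, ?_⟩
  · rw [Finset.card_image_of_injective _ hinj, Finset.card_univ, Fintype.card_prod,
      Fintype.card_fun, hsub]
    simp
  · intro x hx y hy hxy
    obtain ⟨p, -, hp⟩ := Finset.mem_image.mp hx
    obtain ⟨q, -, hq⟩ := Finset.mem_image.mp hy
    subst hp; subst hq
    have hpq : p ≠ q := fun h => hxy (by rw [h])
    constructor
    · -- lower bound: some coordinate contributes
      rw [Dd, Nat.one_le_iff_ne_zero, ← Nat.pos_iff_ne_zero, Finset.card_pos]
      by_cases h1 : p.1 = q.1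
      · have h2 : p.2 ≠ q.2 := fun h => hpq (Prod.ext h1 h)
        obtain ⟨i, hi⟩ := Function.ne_iff.mp h2
        refine ⟨i.val, Finset.mem_filter.mpr ⟨Finset.mem_univ _, ⟨p.2 i, ?_, ?_⟩⟩⟩
        · rw [hf2 p i.val i.2.1 i.2.2]
        · rw [hf2 q i.val i.2.1 i.2.2]
          have : q.2 ⟨i.val, i.2.1, i.2.2⟩ = !(p.2 i) := by
            cases hb : p.2 i <;> cases hc : q.2 ⟨i.val, i.2.1, i.2.2⟩ <;> simp_all
          rw [this]
      · match hb : p.1, hc : q.1 with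
        | none, none => exact absurd (hb ▸ hc ▸ rfl) h1
        | none, some c =>
          refine ⟨i0, Finset.mem_filter.mpr ⟨Finset.mem_univ _, ⟨true, ?_, ?_⟩⟩⟩
          · rw [hf0]; simp [hb]
          · rw [hf0]; simp [hc]
        | some b, none =>
          refine ⟨i0, Finset.mem_filter.mpr ⟨Finset.mem_univ _, ⟨false, ?_, ?_⟩⟩⟩
          · rw [hf0]; simp [hb]
          · rw [hf0]; simp [hc]
        | some b, some c =>
          have hbc : c = !b := by
            have : b ≠ c := fun h => h1 (by rw [hb, hc, h])
            cases b <;> cases c <;> simp_all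
          refine ⟨i1, Finset.mem_filter.mpr ⟨Finset.mem_univ _, ⟨b, ?_, ?_⟩⟩⟩
          · rw [hf1, hb]
          · rw [hf1, hc, hbc]
    · -- upper bound: some coordinate does not contribute
      have hss : (univ.filter fun i =>
          ∃ b : Bool, f p i = some b ∧ f q i = some !b) ⊂ univ := by
        rw [Finset.filter_ssubset]
        match hb : p.1, hc : q.1 with
        | none, _ =>
          refine ⟨i1, Finset.mem_univ _, ?_⟩
          rintro ⟨b, hb', -⟩
          rw [hf1, hb] at hb'; cases hb'
        | some b, none =>
          refine ⟨i1, Finset.mem_univ _, ?_⟩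
          rintro ⟨b', -, hc'⟩
          rw [hf1, hc] at hc'; cases hc'
        | some b, some c =>
          refine ⟨i0, Finset.mem_univ _, ?_⟩
          rintro ⟨b', hb', hc'⟩
          rw [hf0, hb] at hb'
          rw [hf0, hc] at hc'
          simp only [Option.isNone_some] at hb' hc'
          have e1 : b' = false := by simpa using hb'.symm
          have e2 : (!b') = false := by simpa using hc'.symm
          rw [e1] at e2; exact Bool.noConfusion e2
      have := Finset.card_lt_card hss
      rw [Finset.card_univ, Fintype.card_fin] at this
      have : Dd (f p) (f q) < d := this
      omega
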